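/- Let V be a real vector space, Y ⊆ X ⊆ V, and let 𝔹 ⊆ ℝ be a subring. Let 𝔽 := {a/b : a, b ∈ 𝔹, b ≠ 0} ⊆ ℝ be the quotient field of 𝔹 inside ℝ. Then Y is a weak 𝔹-face of X if and only if Y is a weak 𝔽-face of X. -/

import Mathlib

open Finsupp

/-- `R₊ := R ∩ [0,∞)`. -/
def Rplus (R : Set ℝ) : Set ℝ := R ∩ Set.Ici 0

/-- `ℓ(f) := Σ_v f(v)`. -/
noncomputable def ell {V : Type*} [AddCommGroup V] [Module ℝ V] (f : V →₀ ℝ) : ℝ :=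
  f.sum fun _ r => r

/-- `ℓ⃗(f) := Σ_v f(v) • v`. -/
noncomputable def vell {V : Type*} [AddCommGroup V] [Module ℝ V] (f : V →₀ ℝ) : V :=
  f.sum fun v r => r • v

/-- `f ∈ Fin(X,R)`: finitely supported, support in `X`, values in `R ∪ {0}`. -/
def IsFinSupp {V : Type*} [AddCommGroup V] [Module ℝ V] (X : Set V) (R : Set ℝ)
    (f : V →₀ ℝ) : Prop :=
  ↑f.support ⊆ X ∧ ∀ v, f v ∈ R ∪ {0}

/-- `Y` is a weak `R`-face of `X`. -/
def IsWeakFace {V : Type*} [AddCommGroup V] [Module ℝ V] (X Y : Set V) (R : Set ℝ) : Prop :=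
  ∀ f g : V →₀ ℝ, IsFinSupp X (Rplus R) f → IsFinSupp Y (Rplus R) g →
    ell f = ell g → 0 < ell g → vell f = vell g → ↑f.support ⊆ Y

/-- `Y` is a positive weak `R`-face of `X`. -/
def IsPosWeakFace {V : Type*} [AddCommGroup V] [Module ℝ V] (X Y : Set V) (R : Set ℝ) : Prop :=
  ∀ f g : V →₀ ℝ, IsFinSupp X (Rplus R) f → IsFinSupp Y (Rplus R) g →
    vell f = vell g → ell g ≤ ell f ∧ (ell g = ell f ↔ ↑f.support ⊆ Y)

/-- `Y` is `(R',R)`-closed in `X`. -/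
def IsRClosed {V : Type*} [AddCommGroup V] [Module ℝ V] (X Y : Set V) (R' R : Set ℝ) : Prop :=
  ∀ f g : V →₀ ℝ, IsFinSupp X R f → IsFinSupp Y R g →
    ell f = ell g → ell f ∈ R' → ell f ≠ 0 → vell f = vell g → ↑f.support ⊆ Y

/-- The maximizer set `X(φ)`. -/
def maximizer {V : Type*} [AddCommGroup V] [Module ℝ V] (X : Set V) (φ : V →ₗ[ℝ] ℝ) : Set V :=
  {x | x ∈ X ∧ ∀ x' ∈ X, φ x' ≤ φ x}


lemma ell_smul' {V : Type*} [AddCommGroup V] [Module ℝ V] (d : ℝ) (f : V →₀ ℝ) :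
    ell (d • f) = d * ell f := by
  classical
  unfold ell
  rcases eq_or_ne d 0 with h | h
  · simp [h]
  · rw [Finsupp.sum, Finsupp.sum, Finsupp.support_smul_eq h, Finset.mul_sum]
    exact Finset.sum_congr rfl fun v _ => by simp

lemma vell_smul' {V : Type*} [AddCommGroup V] [Module ℝ V] (d : ℝ) (f : V →₀ ℝ) :
    vell (d • f) = d • vell f := by
  classical
  unfold vell
  rcases eq_or_ne d 0 with h | h
  · simp [h]
  · rw [Finsupp.sum, Finsupp.sum, Finsupp.support_smul_eq h, Finset.smul_sum]
    exact Finset.sum_congr rfl fun v _ => by simp [mul_smul]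

/-- For a subring `𝔹 ⊆ ℝ` with quotient field `𝔽 = {a/b : a,b ∈ 𝔹, b ≠ 0}`,
`Y` is a weak `𝔹`-face of `X` iff it is a weak `𝔽`-face of `X`. -/
theorem statement1 {V : Type*} [AddCommGroup V] [Module ℝ V]
    (X Y : Set V) (hYX : Y ⊆ X) (𝔹 : Subring ℝ) :
    IsWeakFace X Y (𝔹 : Set ℝ) ↔
      IsWeakFace X Y {x : ℝ | ∃ a ∈ 𝔹, ∃ b ∈ 𝔹, b ≠ 0 ∧ x = a / b} := by
  classical
  set 𝔽 : Set ℝ := {x : ℝ | ∃ a ∈ 𝔹, ∃ b ∈ 𝔹, b ≠ 0 ∧ x = a / b} with h𝔽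
  have hBF : (𝔹 : Set ℝ) ⊆ 𝔽 := by
    intro a ha
    exact ⟨a, ha, 1, one_mem _, one_ne_zero, by simp⟩
  have hclear : ∀ x : ℝ, x ∈ 𝔽 ∪ {0} → ∃ b : ℝ, b ∈ 𝔹 ∧ 0 < b ∧ b * x ∈ 𝔹 := by
    rintro x (⟨a, ha, b, hb, hbne, rfl⟩ | hx)
    · rcases lt_or_gt_of_ne hbne with hneg | hpos
      · refine ⟨-b, neg_mem hb, by linarith, ?_⟩
        have : -b * (a / b) = -a := by field_simp
        rw [this]; exact neg_mem ha
      · refine ⟨b, hb, hpos, ?_⟩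
        have : b * (a / b) = a := by field_simp
        rw [this]; exact ha
    · exact ⟨1, one_mem _, one_pos, by
        rw [Set.mem_singleton_iff.mp hx, mul_zero]; exact zero_mem _⟩
  constructor
  · -- 𝔹-face → 𝔽-face
    intro hB f g hf hg hℓ hpos hv
    have hfmem : ∀ v, f v ∈ 𝔽 ∪ {0} := fun v => by
      rcases hf.2 v with ⟨h1, _⟩ | h; exacts [Or.inl h1, Or.inr h]
    have hgmem : ∀ v, g v ∈ 𝔽 ∪ {0} := fun v => by
      rcases hg.2 v with ⟨h1, _⟩ | h; exacts [Or.inl h1, Or.inr h]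
    have hβ : ∀ v : V, ∃ b : ℝ, b ∈ 𝔹 ∧ 0 < b ∧ b * f v ∈ 𝔹 ∧ b * g v ∈ 𝔹 := by
      intro v
      obtain ⟨b1, hb1, hb1p, hb1f⟩ := hclear _ (hfmem v)
      obtain ⟨b2, hb2, hb2p, hb2g⟩ := hclear _ (hgmem v)
      refine ⟨b1 * b2, mul_mem hb1 hb2, mul_pos hb1p hb2p, ?_, ?_⟩
      · have : b1 * b2 * f v = b2 * (b1 * f v) := by ring
        rw [this]; exact mul_mem hb2 hb1f
      · have : b1 * b2 * g v = b1 * (b2 * g v) := by ring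
        rw [this]; exact mul_mem hb1 hb2g
    choose β hβB hβp hβf hβg using hβ
    set S : Finset V := f.support ∪ g.support with hS
    set d : ℝ := ∏ v ∈ S, β v with hd
    have hdB : d ∈ 𝔹 := prod_mem fun v _ => hβB v
    have hdp : 0 < d := Finset.prod_pos fun v _ => hβp v
    have hdne : d ≠ 0 := ne_of_gt hdp
    have key : ∀ (h : V →₀ ℝ), (∀ v, β v * h v ∈ 𝔹) → h.support ⊆ S →
        ∀ v, d * h v ∈ 𝔹 := by
      intro h hmem hsub v
      by_cases hv : v ∈ S
      · rw [hd, ← Finset.mul_prod_erase S β hv, mul_assoc, mul_comm (∏ x ∈ S.erase v, β x),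
          ← mul_assoc]
        exact mul_mem (hmem v) (prod_mem fun w _ => hβB w)
      · have : h v = 0 := by
          by_contra hne
          exact hv (hsub (Finsupp.mem_support_iff.mpr hne))
        rw [this, mul_zero]; exact zero_mem _
    have hfS : f.support ⊆ S := Finset.subset_union_left
    have hgS : g.support ⊆ S := Finset.subset_union_right
    have hsf : (d • f).support = f.support := Finsupp.support_smul_eq hdne
    have hsg : (d • g).support = g.support := Finsupp.support_smul_eq hdne
    have hfpos : ∀ v, 0 ≤ f v := fun v => by
      rcases hf.2 v with ⟨_, h2⟩ | h; exacts [h2, le_of_eq h.symm]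
    have hgpos : ∀ v, 0 ≤ g v := fun v => by
      rcases hg.2 v with ⟨_, h2⟩ | h; exacts [h2, le_of_eq h.symm]
    have hf' : IsFinSupp X (Rplus (𝔹 : Set ℝ)) (d • f) := by
      constructor
      · rw [hsf]; exact hf.1
      · intro v
        left
        exact ⟨by simpa using key f hβf hfS v, by
          simp only [Finsupp.smul_apply, smul_eq_mul, Set.mem_Ici]
          exact mul_nonneg hdp.le (hfpos v)⟩
    have hg' : IsFinSupp Y (Rplus (𝔹 : Set ℝ)) (d • g) := by
      constructor
      · rw [hsg]; exact hg.1
      · intro v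
        left
        exact ⟨by simpa using key g hβg hgS v, by
          simp only [Finsupp.smul_apply, smul_eq_mul, Set.mem_Ici]
          exact mul_nonneg hdp.le (hgpos v)⟩
    have := hB (d • f) (d • g) hf' hg'
      (by rw [ell_smul', ell_smul', hℓ])
      (by rw [ell_smul']; exact mul_pos hdp hpos)
      (by rw [vell_smul', vell_smul', hv])
    rwa [hsf] at this
  · -- 𝔽-face → 𝔹-face
    intro hF f g hf hg hℓ hpos hv
    have mono : ∀ (Z : Set V) (h : V →₀ ℝ), IsFinSupp Z (Rplus (𝔹 : Set ℝ)) h →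
        IsFinSupp Z (Rplus 𝔽) h := by
      intro Z h ⟨h1, h2⟩
      refine ⟨h1, fun v => ?_⟩
      rcases h2 v with ⟨ha, hb⟩ | h0
      exacts [Or.inl ⟨hBF ha, hb⟩, Or.inr h0]
    exact hF f g (mono X f hf) (mono Y g hg) hℓ hpos hv
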